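/- Let N ≥ 2, ζ_N = exp(2πi/N), and 1 ≤ k ≤ N. Then ∑_{n=1}^{N-1} ζ_N^{kn}/(1 - ζ_N^n) = k - (N+1)/2. -/

import Mathlib

open Complex Finset

lemma aux_pow_ne_one {N : ℕ} {ζ : ℂ} (hprim : IsPrimitiveRoot ζ N) {n : ℕ}
    (hn : n ∈ Finset.Icc 1 (N - 1)) : ζ ^ n ≠ 1 := by
  simp only [Finset.mem_Icc] at hn
  exact hprim.pow_ne_one_of_pos_of_lt (by omega) (by omega)

lemma aux_geom_sum {N : ℕ} (hN : 2 ≤ N) {ζ : ℂ} (hprim : IsPrimitiveRoot ζ N)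
    {j : ℕ} (hj1 : 1 ≤ j) (hj2 : j < N) :
    ∑ n ∈ Finset.Icc 1 (N - 1), ζ ^ (j * n) = -1 := by
  have hne : ζ ^ j ≠ 1 := hprim.pow_ne_one_of_pos_of_lt (by omega) hj2
  have h0 : ∑ n ∈ Finset.range N, (ζ ^ j) ^ n = 0 := by
    rw [geom_sum_eq hne]
    have : (ζ ^ j) ^ N = 1 := by
      rw [← pow_mul, mul_comm, pow_mul, hprim.pow_eq_one, one_pow]
    rw [this]; simp
  have hIcc : ∑ n ∈ Finset.Icc 1 (N - 1), (ζ ^ j) ^ n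
      = ∑ i ∈ Finset.range (N - 1), (ζ ^ j) ^ (1 + i) := by
    rw [← Finset.Ico_add_one_right_eq_Icc, show N - 1 + 1 = N by omega, Finset.sum_Ico_eq_sum_range]
  have hsplit : ∑ n ∈ Finset.range N, (ζ ^ j) ^ n
      = ∑ n ∈ Finset.Icc 1 (N - 1), (ζ ^ j) ^ n + 1 := by
    have h := Finset.sum_range_succ' (fun n => (ζ ^ j) ^ n) (N - 1)
    rw [show N - 1 + 1 = N by omega] at h
    rw [h, hIcc]
    simp [add_comm]
  rw [hsplit] at h0
  have h1 : ∑ n ∈ Finset.Icc 1 (N - 1), (ζ ^ j) ^ n = -1 := by linear_combination h0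
  calc ∑ n ∈ Finset.Icc 1 (N - 1), ζ ^ (j * n)
      = ∑ n ∈ Finset.Icc 1 (N - 1), (ζ ^ j) ^ n := by
        apply Finset.sum_congr rfl; intro n _; rw [← pow_mul]
    _ = -1 := h1

lemma aux_sum_inv {N : ℕ} (hN : 2 ≤ N) {ζ : ℂ} (hprim : IsPrimitiveRoot ζ N) :
    ∑ n ∈ Finset.Icc 1 (N - 1), 1 / (1 - ζ ^ n) = ((N : ℂ) - 1) / 2 := by
  set S := ∑ n ∈ Finset.Icc 1 (N - 1), 1 / (1 - ζ ^ n) with hS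
  have hrefl : S = ∑ n ∈ Finset.Icc 1 (N - 1), 1 / (1 - ζ ^ (N - n)) := by
    rw [hS]
    exact Finset.sum_nbij' (fun n => N - n) (fun n => N - n)
      (fun a ha => by simp only [Finset.mem_Icc] at ha ⊢; omega)
      (fun a ha => by simp only [Finset.mem_Icc] at ha ⊢; omega)
      (fun a ha => by simp only [Finset.mem_Icc] at ha; show N - (N - a) = a; omega)
      (fun a ha => by simp only [Finset.mem_Icc] at ha; show N - (N - a) = a; omega)
      (fun a ha => by
        simp only [Finset.mem_Icc] at ha
        show 1 / (1 - ζ ^ a) = 1 / (1 - ζ ^ (N - (N - a)))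
        congr 3
        omega)
  have h2 : S + S = (N : ℂ) - 1 := by
    nth_rewrite 2 [hrefl]
    rw [hS, ← Finset.sum_add_distrib]
    have hterm : ∀ n ∈ Finset.Icc 1 (N - 1),
        1 / (1 - ζ ^ n) + 1 / (1 - ζ ^ (N - n)) = 1 := by
      intro n hn
      have hn1 : ζ ^ n ≠ 1 := aux_pow_ne_one hprim hn
      have hn2 : ζ ^ (N - n) ≠ 1 := aux_pow_ne_one hprim (by
        simp only [Finset.mem_Icc] at *; omega)
      have hmul : ζ ^ (N - n) * ζ ^ n = 1 := by
        rw [← pow_add]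
        simp only [Finset.mem_Icc] at hn
        rw [show N - n + n = N by omega, hprim.pow_eq_one]
      have ha : (1 : ℂ) - ζ ^ n ≠ 0 := sub_ne_zero.mpr (Ne.symm hn1)
      have hb : (1 : ℂ) - ζ ^ (N - n) ≠ 0 := sub_ne_zero.mpr (Ne.symm hn2)
      set w := ζ ^ n
      set v := ζ ^ (N - n)
      field_simp
      linear_combination -hmul
    rw [Finset.sum_congr rfl hterm, Finset.sum_const, Nat.card_Icc]
    simp only [nsmul_eq_mul, mul_one]
    push_cast [Nat.cast_sub (show 1 ≤ N by omega)]
    ring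
  linear_combination h2 / 2

theorem sum_pow_div_one_sub_root_of_unity (N : ℕ) (hN : 2 ≤ N)
    (ζ : ℂ) (hζ : ζ = Complex.exp (2 * (Real.pi : ℂ) * Complex.I / N))
    (k : ℕ) (hk1 : 1 ≤ k) (hk2 : k ≤ N) :
    ∑ n ∈ Finset.Icc 1 (N - 1), ζ ^ (k * n) / (1 - ζ ^ n) = (k : ℂ) - ((N : ℂ) + 1) / 2 := by
  have hprim : IsPrimitiveRoot ζ N := by
    rw [hζ]; exact Complex.isPrimitiveRoot_exp N (by omega)
  clear hζ
  induction k, hk1 using Nat.le_induction with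
  | base =>
    have h1 : ∀ n ∈ Finset.Icc 1 (N - 1),
        ζ ^ (1 * n) / (1 - ζ ^ n) = 1 / (1 - ζ ^ n) - 1 := by
      intro n hn
      have hne : (1 : ℂ) - ζ ^ n ≠ 0 := sub_ne_zero.mpr (Ne.symm (aux_pow_ne_one hprim hn))
      field_simp
      ring
    rw [Finset.sum_congr rfl h1, Finset.sum_sub_distrib, aux_sum_inv hN hprim,
      Finset.sum_const, Nat.card_Icc]
    simp only [nsmul_eq_mul, mul_one]
    push_cast [Nat.cast_sub (show 1 ≤ N by omega)]
    ring
  | succ k hk ih =>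
    have hkN : k ≤ N := by omega
    have ihk := ih hkN
    have hstep : ∀ n ∈ Finset.Icc 1 (N - 1),
        ζ ^ ((k + 1) * n) / (1 - ζ ^ n) = ζ ^ (k * n) / (1 - ζ ^ n) - ζ ^ (k * n) := by
      intro n hn
      have hne : (1 : ℂ) - ζ ^ n ≠ 0 := sub_ne_zero.mpr (Ne.symm (aux_pow_ne_one hprim hn))
      rw [show (k + 1) * n = k * n + n by ring, pow_add]
      field_simp
      ring
    rw [Finset.sum_congr rfl hstep, Finset.sum_sub_distrib, ihk,
      aux_geom_sum hN hprim hk (by omega)]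
    push_cast
    ring
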